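/- Suppose I = ℝ or I is an interval with 0 ∈ I ⊆ [0,∞). A function f : Iⁿ → ℝ is horizontally min-additive if and only if the maps δ_f (diagonal section) and δ_f^A restricted to I ∩ [0,∞) (for each A ⊆ [n]) are additive, and for every permutation σ and every x with x_{σ(1)} ≤ ... ≤ x_{σ(n)} one has f(x) = δ_f(x_{σ(1)}) + Σ_{i=2}^n δ_f^{A_σ↑(i)}(x_{σ(i)} - x_{σ(i-1)}), where A_σ↑(i) = {σ(i),...,σ(n)}. -/

import Mathlib

/-- `f` is horizontally min-additive on `Iⁿ`. -/
def HorizMinAdd {n : ℕ} (I : Set ℝ) (f : (Fin n → ℝ) → ℝ) : Prop :=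
  ∀ x : Fin n → ℝ, (∀ i, x i ∈ I) → ∀ c ∈ I, (∀ i, x i - min (x i) c ∈ I) →
    f x = f (fun i => min (x i) c) + f (fun i => x i - min (x i) c)

/-- The section `δ_f^A(t) = f(t·1_A)`. -/
def deltaA {n : ℕ} (f : (Fin n → ℝ) → ℝ) (A : Finset (Fin n)) (t : ℝ) : ℝ :=
  f (fun i => if i ∈ A then t else 0)

lemma memI_aux {I : Set ℝ} (hI : I.OrdConnected) (h0 : (0 : ℝ) ∈ I)
    (hcase : I = Set.univ ∨ I ⊆ Set.Ici 0) {a b : ℝ} (hb : b ∈ I) (ha : 0 ≤ a)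
    (hab : I ⊆ Set.Ici 0 → a ≤ b) : a ∈ I := by
  rcases hcase with h | h
  · simp [h]
  · exact hI.out h0 hb ⟨ha, hab h⟩

lemma min_sub_min_le {a b c : ℝ} (h : b ≤ a) : min a c - min b c ≤ a - b := by
  rcases le_total a c with h1 | h1 <;> rcases le_total b c with h2 | h2 <;>
    [skip; skip; skip; skip]
  · rw [min_eq_left h1, min_eq_left h2]
  · rw [min_eq_left h1, min_eq_right h2]; linarith
  · rw [min_eq_right h1, min_eq_left h2]; linarith
  · rw [min_eq_right h1, min_eq_right h2]; linarith

/-- Auxiliary vector: remainder after subtracting the `k`-th sorted level. -/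
def zAux {n : ℕ} (σ : Equiv.Perm (Fin n)) (x : Fin n → ℝ) (k : Fin n)
    (j : Fin n) : ℝ :=
  if k ≤ σ.symm j then x j - x (σ k) else 0

lemma key_lemma {m : ℕ} {I : Set ℝ} (hI : I.OrdConnected) (h0 : (0 : ℝ) ∈ I)
    (hcase : I = Set.univ ∨ I ⊆ Set.Ici 0) {f : (Fin (m + 1) → ℝ) → ℝ}
    (hf : HorizMinAdd I f) (F0 : f (fun _ => 0) = 0)
    (σ : Equiv.Perm (Fin (m + 1))) (x : Fin (m + 1) → ℝ) (hx : ∀ i, x i ∈ I)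
    (hmono : Monotone (x ∘ σ)) :
    ∀ k, f (zAux σ x k) = ∑ i ∈ Finset.Ioi k,
      deltaA f (Finset.image σ (Finset.Ici i)) (x (σ i) - x (σ (i - 1))) := by
  have hxk : ∀ (k j : Fin (m + 1)), k ≤ σ.symm j → x (σ k) ≤ x j := by
    intro k j h
    have := hmono h
    simpa using this
  have hx0 : ∀ (_ : I ⊆ Set.Ici 0) (j : Fin (m + 1)), 0 ≤ x j :=
    fun h j => h (hx j)
  have hzmem : ∀ k j, zAux σ x k j ∈ I := by
    intro k j
    unfold zAux
    split_ifs with h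
    · exact memI_aux hI h0 hcase (hx j) (sub_nonneg.2 (hxk k j h))
        (fun hIci => by have := hx0 hIci (σ k); linarith)
    · exact h0
  intro k
  induction k using Fin.reverseInduction with
  | last =>
    have hzl : zAux σ x (Fin.last m) = fun _ => 0 := by
      funext j
      unfold zAux
      split_ifs with h
      · have h1 : σ.symm j = Fin.last m := le_antisymm (Fin.le_last _) h
        have h2 : j = σ (Fin.last m) := by rw [← h1, Equiv.apply_symm_apply]
        rw [← h2]
        exact sub_self _
      · rfl
    have hempty : Finset.Ioi (Fin.last m) = ∅ := by
      ext j
      simp only [Finset.mem_Ioi, Finset.notMem_empty, iff_false]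
      exact (Fin.le_last j).not_gt
    rw [hzl, F0, hempty, Finset.sum_empty]
  | cast i ih =>
    set c := x (σ i.succ) - x (σ i.castSucc) with hc
    have hcs : i.castSucc ≤ i.succ := (Fin.castSucc_lt_succ : i.castSucc < i.succ).le
    have hc0 : 0 ≤ c := sub_nonneg.2 (hmono hcs)
    have hcI : c ∈ I := memI_aux hI h0 hcase (hx (σ i.succ)) hc0
      (fun hIci => by have := hx0 hIci (σ i.castSucc); rw [hc]; linarith)
    have hzz : ∀ j, ¬ i.succ ≤ σ.symm j → zAux σ x i.castSucc j = 0 := by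
      intro j h
      unfold zAux
      split_ifs with h'
      · have h2 : σ.symm j ≤ i.castSucc :=
          le_of_not_gt (fun hlt => h (Fin.castSucc_lt_iff_succ_le.1 hlt))
        have h1 : σ.symm j = i.castSucc := le_antisymm h2 h'
        have h3 : j = σ i.castSucc := by rw [← h1, Equiv.apply_symm_apply]
        rw [← h3]
        exact sub_self _
      · rfl
    have hzbig : ∀ j, i.succ ≤ σ.symm j →
        zAux σ x i.castSucc j = x j - x (σ i.castSucc) := by
      intro j h
      unfold zAux
      rw [if_pos (hcs.trans h)]
    have hmemA : ∀ j, j ∈ Finset.image σ (Finset.Ici i.succ) ↔ i.succ ≤ σ.symm j := by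
      intro j
      simp only [Finset.mem_image, Finset.mem_Ici]
      constructor
      · rintro ⟨a, ha, rfl⟩; simpa using ha
      · intro h; exact ⟨σ.symm j, h, by simp⟩
    have hcle : ∀ j, i.succ ≤ σ.symm j → c ≤ x j - x (σ i.castSucc) := by
      intro j h
      have := hxk i.succ j h
      rw [hc]; linarith
    have hminv : (fun j => min (zAux σ x i.castSucc j) c) =
        (fun j => if j ∈ Finset.image σ (Finset.Ici i.succ) then c else 0) := by
      funext j
      by_cases h : i.succ ≤ σ.symm j
      · rw [hzbig j h, min_eq_right (hcle j h), if_pos ((hmemA j).2 h)]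
      · rw [hzz j h, if_neg (fun hh => h ((hmemA j).1 hh)), min_eq_left hc0]
    have hremv : (fun j => zAux σ x i.castSucc j - min (zAux σ x i.castSucc j) c) =
        zAux σ x i.succ := by
      funext j
      by_cases h : i.succ ≤ σ.symm j
      · rw [hzbig j h, min_eq_right (hcle j h)]
        unfold zAux
        rw [if_pos h, hc]
        ring
      · rw [hzz j h, min_eq_left hc0]
        unfold zAux
        rw [if_neg h, sub_zero]
    have hremmem : ∀ j, zAux σ x i.castSucc j - min (zAux σ x i.castSucc j) c ∈ I := by
      intro j
      have := congrFun hremv j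
      rw [this]
      exact hzmem i.succ j
    have happ := hf (zAux σ x i.castSucc) (hzmem i.castSucc) c hcI hremmem
    rw [hminv, hremv] at happ
    have hIoi : Finset.Ioi i.castSucc = insert i.succ (Finset.Ioi i.succ) := by
      ext j
      simp only [Finset.mem_Ioi, Finset.mem_insert]
      constructor
      · intro h
        exact (Fin.castSucc_lt_iff_succ_le.1 h).eq_or_lt.imp Eq.symm id
      · rintro (rfl | h)
        · exact (Fin.castSucc_lt_succ : i.castSucc < i.succ)
        · exact (Fin.castSucc_lt_succ : i.castSucc < i.succ).trans h
    have hsub : i.succ - 1 = i.castSucc := by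
      ext
      rw [Fin.coe_sub_one, if_neg (Fin.succ_ne_zero i)]
      simp
    rw [hIoi, Finset.sum_insert (by simp), hsub, happ, ih]
    show deltaA f _ c + _ = _ + _
    rw [hc]

theorem horizMinAdd_characterization (n : ℕ) [NeZero n] (I : Set ℝ)
    (hI : I.OrdConnected) (h0 : (0 : ℝ) ∈ I) (hnt : ∃ x ∈ I, x ≠ 0)
    (hcase : I = Set.univ ∨ I ⊆ Set.Ici 0)
    (f : (Fin n → ℝ) → ℝ) :
    HorizMinAdd I f ↔
      ((∀ x ∈ I, ∀ x' ∈ I, x + x' ∈ I →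
          f (fun _ => x + x') = f (fun _ => x) + f (fun _ => x')) ∧
        (∀ A : Finset (Fin n), ∀ x ∈ I ∩ Set.Ici 0, ∀ x' ∈ I ∩ Set.Ici 0,
          x + x' ∈ I ∩ Set.Ici 0 →
            deltaA f A (x + x') = deltaA f A x + deltaA f A x') ∧
        (∀ σ : Equiv.Perm (Fin n), ∀ x : Fin n → ℝ, (∀ i, x i ∈ I) →
          Monotone (x ∘ σ) →
            f x = f (fun _ => x (σ 0)) +
              ∑ i ∈ Finset.univ.erase (0 : Fin n),
                deltaA f (Finset.image σ (Finset.Ici i))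
                  (x (σ i) - x (σ (i - 1))))) := by
  obtain ⟨m, rfl⟩ : ∃ m, n = m + 1 :=
    ⟨n - 1, (Nat.succ_pred_eq_of_pos (Nat.pos_of_ne_zero (NeZero.ne n))).symm⟩
  constructor
  · intro hf
    have F0 : f (fun _ => 0) = 0 := by
      have := hf (fun _ => 0) (fun _ => h0) 0 h0 (by simpa using h0)
      simp only [min_self, sub_self] at this
      linarith
    refine ⟨?_, ?_, ?_⟩
    · -- diagonal additivity
      intro a ha b hb hab
      by_cases hb0 : 0 ≤ b
      · have happ := hf (fun _ => a + b) (fun _ => hab) a ha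
          (fun _ => by rw [min_eq_right (le_add_of_nonneg_right hb0),
            add_sub_cancel_left]; exact hb)
        simp only [min_eq_right (le_add_of_nonneg_right hb0),
          add_sub_cancel_left] at happ
        exact happ
      · rcases hcase with hu | hici
        · subst hu
          have h1a := hf (fun _ => a) (fun _ => trivial) (a + b) trivial
            (fun _ => trivial)
          have h2a := hf (fun _ => (0 : ℝ)) (fun _ => trivial) b trivial
            (fun _ => trivial)
          have hb0' : b ≤ 0 := le_of_not_ge hb0
          simp only [min_eq_right (show a + b ≤ a by linarith),
            show a - (a + b) = -b by ring] at h1a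
          simp only [min_eq_right (show b ≤ (0:ℝ) by linarith), zero_sub] at h2a
          linarith
        · exact absurd (hici hb) (by simpa using lt_of_not_ge hb0)
    · -- deltaA additivity
      rintro A a ⟨haI, ha0⟩ b ⟨hbI, hb0⟩ ⟨habI, -⟩
      have ha0' : (0:ℝ) ≤ a := ha0
      have hb0' : (0:ℝ) ≤ b := hb0
      have happ := hf (fun i => if i ∈ A then a + b else 0)
        (fun i => by
          show (if i ∈ A then a + b else 0) ∈ I
          split_ifs; exacts [habI, h0]) a haI
        (fun i => by
          by_cases hi : i ∈ A
          · show (if i ∈ A then a + b else 0) - min (if i ∈ A then a + b else 0) a ∈ I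
            rw [if_pos hi, min_eq_right (le_add_of_nonneg_right hb0'), add_sub_cancel_left]
            exact hbI
          · show (if i ∈ A then a + b else 0) - min (if i ∈ A then a + b else 0) a ∈ I
            rw [if_neg hi, min_eq_left ha0', sub_self]
            exact h0)
      have e1 : (fun i => min (if i ∈ A then a + b else 0) a) =
          fun i => if i ∈ A then a else 0 := by
        funext i
        by_cases hi : i ∈ A
        · rw [if_pos hi, if_pos hi, min_eq_right (le_add_of_nonneg_right hb0')]
        · rw [if_neg hi, if_neg hi, min_eq_left ha0']
      have e2 : (fun i => (if i ∈ A then a + b else 0) -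
          min (if i ∈ A then a + b else 0) a) =
          fun i => if i ∈ A then b else 0 := by
        funext i
        by_cases hi : i ∈ A
        · rw [if_pos hi, if_pos hi, min_eq_right (le_add_of_nonneg_right hb0')]
          ring
        · rw [if_neg hi, if_neg hi, min_eq_left ha0', sub_self]
      rw [e1, e2] at happ
      exact happ
    · -- the decomposition
      intro σ x hx hmono
      have hxk : ∀ (k j : Fin (m + 1)), k ≤ σ.symm j → x (σ k) ≤ x j := by
        intro k j h
        have := hmono h
        simpa using this
      have h00 : ∀ j, x (σ 0) ≤ x j := fun j => hxk 0 j (Fin.zero_le _)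
      have happ0 := hf x hx (x (σ 0)) (hx _)
        (fun j => by
          rw [min_eq_right (h00 j)]
          exact memI_aux hI h0 hcase (hx j) (sub_nonneg.2 (h00 j))
            (fun hIci => by have : (0:ℝ) ≤ x (σ 0) := hIci (hx (σ 0)); linarith))
      have e1 : (fun j => min (x j) (x (σ 0))) = fun _ => x (σ 0) :=
        funext fun j => min_eq_right (h00 j)
      have e2 : (fun j => x j - min (x j) (x (σ 0))) = zAux σ x 0 := by
        funext j
        rw [min_eq_right (h00 j)]
        unfold zAux
        rw [if_pos (Fin.zero_le _)]
      rw [e1, e2] at happ0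
      have F0 : f (fun _ => 0) = 0 := by
        have := hf (fun _ => 0) (fun _ => h0) 0 h0 (by simpa using h0)
        simp only [min_self, sub_self] at this
        linarith
      have key := key_lemma hI h0 hcase hf F0 σ x hx hmono 0
      have hIoi0 : Finset.Ioi (0 : Fin (m + 1)) = Finset.univ.erase 0 := by
        ext j
        simp [Finset.mem_Ioi, Fin.pos_iff_ne_zero]
      rw [happ0, key, hIoi0]
  · rintro ⟨h1, h2, h3⟩ x hx c hc hrem
    set σ := Tuple.sort x with hσdef
    have hmx : Monotone (x ∘ σ) := Tuple.monotone_sort x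
    set mv : Fin (m + 1) → ℝ := fun i => min (x i) c with hmv
    set pv : Fin (m + 1) → ℝ := fun i => x i - min (x i) c with hpv
    have hmvI : ∀ i, mv i ∈ I := by
      intro i
      rcases le_total (x i) c with h | h
      · simpa [hmv, min_eq_left h] using hx i
      · simpa [hmv, min_eq_right h] using hc
    have hpvI : ∀ i, pv i ∈ I := hrem
    have hmvmono : Monotone (mv ∘ σ) := fun a b hab =>
      min_le_min (hmx hab) le_rfl
    have hpvmono : Monotone (pv ∘ σ) := by
      intro a b hab
      have h1' : min (x (σ b)) c - min (x (σ a)) c ≤ x (σ b) - x (σ a) :=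
        min_sub_min_le (hmx hab)
      show pv (σ a) ≤ pv (σ b)
      rw [hpv]
      dsimp only
      linarith
    have Ex := h3 σ x hx hmx
    have Em := h3 σ mv hmvI hmvmono
    have Ep := h3 σ pv hpvI hpvmono
    have hd : f (fun _ => x (σ 0)) = f (fun _ => mv (σ 0)) + f (fun _ => pv (σ 0)) := by
      have hsum : mv (σ 0) + pv (σ 0) = x (σ 0) := by rw [hmv, hpv]; dsimp only; ring
      have := h1 (mv (σ 0)) (hmvI _) (pv (σ 0)) (hpvI _)
        (by rw [hsum]; exact hx _)
      rw [hsum] at this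
      exact this
    have hterm : ∀ i ∈ Finset.univ.erase (0 : Fin (m + 1)),
        deltaA f (Finset.image σ (Finset.Ici i)) (x (σ i) - x (σ (i - 1))) =
          deltaA f (Finset.image σ (Finset.Ici i)) (mv (σ i) - mv (σ (i - 1))) +
          deltaA f (Finset.image σ (Finset.Ici i)) (pv (σ i) - pv (σ (i - 1))) := by
      intro i hi
      have hne : i ≠ 0 := (Finset.mem_erase.1 hi).1
      have hlt : i - 1 ≤ i := by
        rw [Fin.le_def, Fin.coe_sub_one, if_neg hne]
        omega
      have hxle : x (σ (i - 1)) ≤ x (σ i) := hmx hlt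
      have hxd : (0:ℝ) ≤ x (σ i) - x (σ (i - 1)) := by linarith
      have hmle : mv (σ (i - 1)) ≤ mv (σ i) := hmvmono hlt
      have hple : pv (σ (i - 1)) ≤ pv (σ i) := hpvmono hlt
      have hmd : (0:ℝ) ≤ mv (σ i) - mv (σ (i - 1)) := by linarith
      have hpd : (0:ℝ) ≤ pv (σ i) - pv (σ (i - 1)) := by linarith
      have hsumeq : mv (σ i) - mv (σ (i - 1)) + (pv (σ i) - pv (σ (i - 1))) =
          x (σ i) - x (σ (i - 1)) := by rw [hmv, hpv]; dsimp only; ring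
      have hmdle : mv (σ i) - mv (σ (i - 1)) ≤ x (σ i) - x (σ (i - 1)) := by
        rw [hmv]; dsimp only; exact min_sub_min_le hxle
      have hpdle : pv (σ i) - pv (σ (i - 1)) ≤ x (σ i) - x (σ (i - 1)) := by
        have : min (x (σ (i-1))) c ≤ min (x (σ i)) c := min_le_min hxle le_rfl
        rw [hpv]; dsimp only; linarith
      have hxim : x (σ i) - x (σ (i - 1)) ∈ I :=
        memI_aux hI h0 hcase (hx (σ i)) hxd
          (fun hIci => by have : (0:ℝ) ≤ x (σ (i-1)) := hIci (hx (σ (i-1))); linarith)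
      have hxile : I ⊆ Set.Ici 0 → x (σ i) - x (σ (i - 1)) ≤ x (σ i) :=
        fun hIci => by have : (0:ℝ) ≤ x (σ (i-1)) := hIci (hx (σ (i-1))); linarith
      have hmim : mv (σ i) - mv (σ (i - 1)) ∈ I :=
        memI_aux hI h0 hcase (hx (σ i)) hmd
          (fun hIci => le_trans hmdle (hxile hIci))
      have hpim : pv (σ i) - pv (σ (i - 1)) ∈ I :=
        memI_aux hI h0 hcase (hx (σ i)) hpd
          (fun hIci => le_trans hpdle (hxile hIci))
      have := h2 (Finset.image σ (Finset.Ici i))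
        (mv (σ i) - mv (σ (i - 1))) ⟨hmim, hmd⟩
        (pv (σ i) - pv (σ (i - 1))) ⟨hpim, hpd⟩
        (by rw [hsumeq]; exact ⟨hxim, hxd⟩)
      rw [hsumeq] at this
      exact this
    show f x = f mv + f pv
    rw [Ex, Em, Ep, hd, Finset.sum_congr rfl hterm, Finset.sum_add_distrib]
    ring
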